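/- For every metric space X, every natural number n ≥ 1 and every F ∈ 𝒦(X), the sets 𝒜_n(X) and 𝒜_n(X,F) are F_σδ subsets of 𝒦(X). -/

import Mathlib

open TopologicalSpace Filter Set

/-- `𝒜_n(X) = {A ∈ 𝒦(X) : 1 ≤ |A'| ≤ n}` where `A'` is the derived set of `A` in `X`. -/
def An (X : Type*) [MetricSpace X] (n : ℕ) : Set (NonemptyCompacts X) :=
  {A | 1 ≤ (derivedSet (A : Set X)).ncard ∧ (derivedSet (A : Set X)).ncard ≤ n}

/-- `𝒜_n(X,F) = {A ∈ 𝒜_n(X) : A' ⊆ F}`. -/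
def AnF (X : Type*) [MetricSpace X] (n : ℕ) (F : Set X) : Set (NonemptyCompacts X) :=
  {A | A ∈ An X n ∧ derivedSet (A : Set X) ⊆ F}

/-- `𝒜_ω(X) = {A ∈ 𝒦(X) : A' is nonempty and finite}`. -/
def Aom (X : Type*) [MetricSpace X] : Set (NonemptyCompacts X) :=
  {A | (derivedSet (A : Set X)).Nonempty ∧ (derivedSet (A : Set X)).Finite}

/-- `𝒜_ω(X,F) = {A ∈ 𝒜_ω(X) : A' ⊆ F}`. -/
def AomF (X : Type*) [MetricSpace X] (F : Set X) : Set (NonemptyCompacts X) :=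
  {A | A ∈ Aom X ∧ derivedSet (A : Set X) ⊆ F}

/-- `𝒜_{ω+1}(X) = {A ∈ 𝒦(X) : A' is nonempty and countable}`. -/
def Aom1 (X : Type*) [MetricSpace X] : Set (NonemptyCompacts X) :=
  {A | (derivedSet (A : Set X)).Nonempty ∧ (derivedSet (A : Set X)).Countable}

/-- `ℋ(X) = {A ∈ 𝒦(X) : A countable}`. -/
def HH (X : Type*) [MetricSpace X] : Set (NonemptyCompacts X) :=
  {A | (A : Set X).Countable}

/-- F_σ set: a countable union of closed sets. -/
def IsFsigma {Y : Type*} [TopologicalSpace Y] (S : Set Y) : Prop :=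
  ∃ f : ℕ → Set Y, (∀ i, IsClosed (f i)) ∧ S = ⋃ i, f i

/-- F_σδ set: a countable intersection of F_σ sets. -/
def IsFsigmaDelta {Y : Type*} [TopologicalSpace Y] (S : Set Y) : Prop :=
  ∃ f : ℕ → Set Y, (∀ i, IsFsigma (f i)) ∧ S = ⋂ i, f i

/-- F_σδσ set: a countable union of F_σδ sets. -/
def IsFsigmaDeltaSigma {Y : Type*} [TopologicalSpace Y] (S : Set Y) : Prop :=
  ∃ f : ℕ → Set Y, (∀ i, IsFsigmaDelta (f i)) ∧ S = ⋃ i, f i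

/-- G_δσ set: a countable union of G_δ sets. -/
def IsGdeltaSigma {Y : Type*} [TopologicalSpace Y] (S : Set Y) : Prop :=
  ∃ f : ℕ → Set Y, (∀ i, IsGδ (f i)) ∧ S = ⋃ i, f i

/-- G_δσδ set: a countable intersection of G_δσ sets. -/
def IsGdeltaSigmaDelta {Y : Type*} [TopologicalSpace Y] (S : Set Y) : Prop :=
  ∃ f : ℕ → Set Y, (∀ i, IsGdeltaSigma (f i)) ∧ S = ⋂ i, f i

/-- A space is of the first category in itself if it is the union of countably many
subsets that are nowhere dense in it. -/
def FirstCategoryInItself (T : Type*) [TopologicalSpace T] : Prop :=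
  ∃ f : ℕ → Set T, (∀ i, IsNowhereDense (f i)) ∧ (⋃ i, f i) = Set.univ

/-- A space is strongly homogeneous if any two nonempty clopen subsets are homeomorphic. -/
def StronglyHomogeneous (T : Type*) [TopologicalSpace T] : Prop :=
  ∀ U V : Set T, IsClopen U → IsClopen V → U.Nonempty → V.Nonempty → Nonempty (↥U ≃ₜ ↥V)

/-- The standard set `P₃` in the Cantor cube `{0,1}^ℕ`. -/
def P3 : Set (ℕ → Bool) :=
  {x | ∀ n : ℕ, ∀ᶠ k in Filter.atTop, x (2 ^ n * (2 * k + 1)) = false}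

/-- The standard set `S₄` in the Cantor cube `{0,1}^ℕ`. -/
def S4 : Set (ℕ → Bool) :=
  {x | ∀ᶠ n in Filter.atTop, ∀ᶠ k in Filter.atTop, x (2 ^ n * (2 * k + 1)) = false}

/-- The standard set `Π₃` in the Hilbert cube `[0,1]^ℕ`. -/
def Pi3 : Set (ℕ → ↥unitInterval) :=
  {x | ∀ n : ℕ, ∀ᶠ m in Filter.atTop, x (2 ^ n * (2 * m + 1)) = 0}

/-- The standard set `Σ₄` in the Hilbert cube `[0,1]^ℕ`. -/
def Sigma4 : Set (ℕ → ↥unitInterval) :=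
  {x | ∃ n₀ : ℕ, ∀ n ≥ n₀, ∀ᶠ m in Filter.atTop, x (2 ^ n * (2 * m + 1)) = 0}

/-- `c₀`: the space of real sequences converging to `0`, as a subspace of `ℝ^ℕ`
with the product topology. -/
def c0 : Set (ℕ → ℝ) := {x | Filter.Tendsto x Filter.atTop (nhds 0)}

section Statement10Aux

open Metric Topology

variable {X : Type*} [MetricSpace X]

private lemma NC.exists_close (A B : NonemptyCompacts X) {x : X} (hx : x ∈ (A : Set X))
    {r : ℝ} (h : dist A B < r) : ∃ y ∈ (B : Set X), dist x y < r := by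
  rw [NonemptyCompacts.dist_eq] at h
  exact exists_dist_lt_of_hausdorffDist_lt hx h
    (hausdorffEdist_ne_top_of_nonempty_of_bounded A.nonempty B.nonempty
      A.isCompact.isBounded B.isCompact.isBounded)

/-- The basic closed building block. -/
private def coreSet (X : Type*) [MetricSpace X] (N m : ℕ) (r c : ℝ) (F : Set X) :
    Set (NonemptyCompacts X) :=
  {A | ∃ f : Fin N → X, (∀ i, f i ∈ (A : Set X)) ∧
    ({a ∈ (A : Set X) | (∀ i, r < dist a (f i)) ∧ c < Metric.infDist a F}).encard ≤ m}

private lemma accPt_infinite {x : X} {S : Set X} (h : AccPt x (𝓟 S)) : S.Infinite := by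
  intro hfin
  have hcl : IsClosed (S \ {x}) := (hfin.subset Set.diff_subset).isClosed
  have hU : (S \ {x})ᶜ ∈ 𝓝 x := hcl.isOpen_compl.mem_nhds (by simp)
  obtain ⟨y, ⟨hy1, hy2⟩, hy3⟩ := accPt_iff_nhds.mp h _ hU
  exact hy1 ⟨hy2, hy3⟩

private lemma accPt_nbhd_infinite {x : X} {S U : Set X} (h : AccPt x (𝓟 S)) (hU : U ∈ 𝓝 x) :
    (U ∩ S).Infinite :=
  accPt_infinite (h.nhds_inter hU)

private lemma infinite_iff_derivedSet_nonempty (A : NonemptyCompacts X) :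
    (A : Set X).Infinite ↔ (derivedSet (A : Set X)).Nonempty := by
  constructor
  · intro h
    obtain ⟨x, -, hx⟩ := h.exists_accPt_of_subset_isCompact A.isCompact subset_rfl
    exact ⟨x, hx⟩
  · rintro ⟨x, hx⟩
    exact accPt_infinite hx

private lemma finite_of_compact_subset_disjoint_derived {A : NonemptyCompacts X} {L : Set X}
    (hLA : L ⊆ (A : Set X)) (hLc : IsClosed L)
    (hdis : ∀ x ∈ L, x ∉ derivedSet (A : Set X)) : L.Finite := by
  by_contra hinf
  obtain ⟨x, hxL, hx⟩ := Set.Infinite.exists_accPt_of_subset_isCompact hinf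
      (A.isCompact.of_isClosed_subset hLc hLA) subset_rfl
  exact hdis x hxL (hx.mono (principal_mono.2 hLA))

end Statement10Aux
section Statement10Closed

open Metric Topology

variable {X : Type*} [MetricSpace X]

private lemma isClosed_coreSet (N m : ℕ) (r c : ℝ) (F : Set X) :
    IsClosed (coreSet X N m r c F) := by
  refine IsSeqClosed.isClosed fun u A hu hA => ?_
  simp only [coreSet, Set.mem_setOf_eq] at hu ⊢
  choose f hfmem hfcard using hu
  have hdist0 : Tendsto (fun j => dist (u j) A) atTop (𝓝 0) :=
    tendsto_iff_dist_tendsto_zero.1 hA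
  have hdist0' : Tendsto (fun j => dist A (u j)) atTop (𝓝 0) := by
    simpa [dist_comm] using hdist0
  have hsum0 : Tendsto (fun j => dist (u j) A + (1 : ℝ) / (j + 1)) atTop (𝓝 0) := by
    simpa using hdist0.add tendsto_one_div_add_atTop_nhds_zero_nat
  have hex : ∀ j i, ∃ y ∈ (A : Set X), dist (f j i) y < dist (u j) A + 1 / (j + 1) := by
    intro j i
    refine NC.exists_close (u j) A (hfmem j i) ?_
    have h1 : (0:ℝ) < 1 / ((j:ℝ) + 1) := by positivity
    linarith
  choose g hgmem hgdist using hex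
  obtain ⟨l, hlmem, φ, hφ, hgl⟩ :=
    (isCompact_univ_pi fun _ : Fin N => A.isCompact).tendsto_subseq
      (x := g) (fun j => by simp only [Set.mem_univ_pi]; exact hgmem j)
  have hlmem' : ∀ i, l i ∈ (A : Set X) := fun i => hlmem i (Set.mem_univ i)
  have hfl : ∀ i, Tendsto (fun j => f (φ j) i) atTop (𝓝 (l i)) := by
    intro i
    have hgi : Tendsto (fun j => g (φ j) i) atTop (𝓝 (l i)) := by
      have := tendsto_pi_nhds.1 hgl i
      simpa [Function.comp] using this
    have hsub : Tendsto (fun j => dist (u (φ j)) A + 1 / ((φ j : ℝ) + 1)) atTop (𝓝 0) := by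
      have := hsum0.comp hφ.tendsto_atTop
      simpa [Function.comp_def] using this
    have hdfg : Tendsto (fun j => dist (f (φ j) i) (g (φ j) i)) atTop (𝓝 0) :=
      squeeze_zero (fun j => dist_nonneg) (fun j => (hgdist (φ j) i).le) hsub
    rw [tendsto_iff_dist_tendsto_zero]
    refine squeeze_zero (fun j => dist_nonneg) (fun j => dist_triangle _ (g (φ j) i) _) ?_
    simpa using hdfg.add (tendsto_iff_dist_tendsto_zero.1 hgi)
  refine ⟨l, hlmem', ?_⟩
  by_contra hcon
  push_neg at hcon
  have hle : ((m : ℕ∞) + 1) ≤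
      ({a ∈ (A : Set X) | (∀ i, r < dist a (l i)) ∧ c < Metric.infDist a F}).encard :=
    Order.add_one_le_of_lt hcon
  obtain ⟨t, htsub, htcard⟩ := Set.exists_subset_encard_eq hle
  have htfin : t.Finite := Set.finite_of_encard_eq_coe (k := m + 1) (by exact_mod_cast htcard)
  have hex2 : ∀ (j : ℕ) (y : X), ∃ z, y ∈ t → z ∈ ((u (φ j)) : Set X) ∧
      dist y z < dist A (u (φ j)) + 1 / ((j : ℝ) + 1) := by
    intro j y
    by_cases hy : y ∈ t
    · obtain ⟨z, hz1, hz2⟩ := NC.exists_close A (u (φ j)) (htsub hy).1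
        (show dist A (u (φ j)) < dist A (u (φ j)) + 1 / ((j : ℝ) + 1) by
          have h1 : (0:ℝ) < 1 / ((j:ℝ) + 1) := by positivity
          linarith)
      exact ⟨z, fun _ => ⟨hz1, hz2⟩⟩
    · exact ⟨y, fun h => absurd h hy⟩
  choose z hz using hex2
  have hzy : ∀ y ∈ t, Tendsto (fun j => z j y) atTop (𝓝 y) := by
    intro y hy
    rw [tendsto_iff_dist_tendsto_zero]
    have hbound : Tendsto (fun j => dist A (u (φ j)) + 1 / ((j : ℝ) + 1)) atTop (𝓝 0) := by
      have h1 : Tendsto (fun j => dist A (u (φ j))) atTop (𝓝 0) := by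
        simpa [Function.comp_def] using hdist0'.comp hφ.tendsto_atTop
      simpa using h1.add tendsto_one_div_add_atTop_nhds_zero_nat
    exact squeeze_zero (fun j => dist_nonneg)
      (fun j => by simpa [dist_comm] using ((hz j y hy).2).le) hbound
  have hev : ∀ᶠ j in atTop, ∀ y ∈ t,
      (z j y ∈ ((u (φ j)) : Set X) ∧
        (∀ i, r < dist (z j y) (f (φ j) i)) ∧ c < Metric.infDist (z j y) F) ∧
      ∀ y' ∈ t, y ≠ y' → z j y ≠ z j y' := by
    rw [htfin.eventually_all]
    intro y hy
    obtain ⟨hyA, hydist, hyinf⟩ := htsub hy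
    refine Filter.Eventually.and (Filter.Eventually.and ?_ (Filter.Eventually.and ?_ ?_)) ?_
    · exact Filter.Eventually.of_forall fun j => (hz j y hy).1
    · rw [eventually_all]
      intro i
      have hT : Tendsto (fun j => dist (z j y) (f (φ j) i)) atTop (𝓝 (dist y (l i))) :=
        (hzy y hy).dist (hfl i)
      exact hT.eventually (eventually_gt_nhds (hydist i))
    · have hT : Tendsto (fun j => Metric.infDist (z j y) F) atTop (𝓝 (Metric.infDist y F)) :=
        ((continuous_infDist_pt F).continuousAt).tendsto.comp (hzy y hy)
      exact hT.eventually (eventually_gt_nhds hyinf)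
    · rw [htfin.eventually_all]
      intro y' hy'
      rcases eq_or_ne y y' with rfl | hne
      · exact Filter.Eventually.of_forall fun _ h => absurd rfl h
      · filter_upwards [((hzy y hy).dist (hzy y' hy')).eventually
          (eventually_gt_nhds (dist_pos.2 hne))] with j hj
        intro _ heq
        rw [heq, dist_self] at hj
        exact lt_irrefl _ hj
  obtain ⟨j, hj⟩ := hev.exists
  have himg : z j '' t ⊆
      {a ∈ ((u (φ j)) : Set X) | (∀ i, r < dist a (f (φ j) i)) ∧ c < Metric.infDist a F} := by
    rintro _ ⟨y, hy, rfl⟩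
    exact (hj y hy).1
  have hinj : Set.InjOn (z j) t := by
    intro y hy y' hy' heq
    by_contra hne
    exact (hj y hy).2 y' hy' hne heq
  have hbad : (m : ℕ∞) + 1 ≤ (m : ℕ∞) := by
    calc (m : ℕ∞) + 1 = t.encard := htcard.symm
    _ = (z j '' t).encard := (hinj.encard_image).symm
    _ ≤ _ := Set.encard_mono himg
    _ ≤ (m : ℕ∞) := hfcard (φ j)
  exact absurd ((ENat.add_one_le_iff (ENat.coe_ne_top m)).1 hbad) (lt_irrefl _)

end Statement10Closed
section Statement10Equiv

open Metric Topology

variable {X : Type*} [MetricSpace X]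

private lemma coreSet_zero_eq (m : ℕ) :
    coreSet X 0 m 0 (-1) (∅ : Set X) =
      {A : NonemptyCompacts X | ((A : Set X)).encard ≤ m} := by
  have hset : ∀ (A : NonemptyCompacts X) (f : Fin 0 → X),
      {a ∈ (A : Set X) | (∀ i, (0:ℝ) < dist a (f i)) ∧ (-1:ℝ) < infDist a (∅ : Set X)}
        = (A : Set X) := by
    intro A f
    ext a
    simp only [Set.mem_setOf_eq]
    exact ⟨fun h => h.1, fun h => ⟨h, fun i => i.elim0,
      lt_of_lt_of_le (by norm_num) infDist_nonneg⟩⟩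
  ext A
  simp only [coreSet, Set.mem_setOf_eq]
  constructor
  · rintro ⟨f, -, hcard⟩
    rwa [hset A f] at hcard
  · intro h
    exact ⟨Fin.elim0, fun i => i.elim0, by rw [hset A Fin.elim0]; exact h⟩

private lemma derivedSet_subset_self (A : NonemptyCompacts X) :
    derivedSet (A : Set X) ⊆ (A : Set X) :=
  (derivedSet_subset_closure _).trans A.isCompact.isClosed.closure_eq.subset

private lemma mem_core_of_derived (A : NonemptyCompacts X) (n : ℕ)
    (hD : (derivedSet (A : Set X)).encard ≤ n) (k : ℕ) :
    ∃ m, A ∈ coreSet X n m (((k:ℝ)+1))⁻¹ (-1) ∅ := by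
  have hpos : (0:ℝ) < (((k:ℝ)+1))⁻¹ := by positivity
  have hDfin : (derivedSet (A : Set X)).Finite :=
    (derivedSet (A : Set X)).finite_or_infinite.resolve_right
      (fun h => by simp [h.encard_eq] at hD)
  obtain ⟨a0, ha0⟩ := A.nonempty
  set l : List X := hDfin.toFinset.toList with hl
  have hlen : l.length ≤ n := by
    have h1 : (derivedSet (A : Set X)).encard = (hDfin.toFinset.card : ℕ∞) :=
      hDfin.encard_eq_coe_toFinset_card
    rw [h1] at hD
    rw [hl, Finset.length_toList]
    exact_mod_cast hD
  set f : Fin n → X := fun i => l.getD i a0 with hf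
  have hfmem : ∀ i, f i ∈ (A : Set X) := by
    intro i
    by_cases hi : (i : ℕ) < l.length
    · rw [hf]
      simp only [List.getD_eq_getElem l a0 hi]
      refine derivedSet_subset_self A ?_
      rw [← hDfin.mem_toFinset, ← Finset.mem_toList]
      exact List.getElem_mem hi
    · rw [hf]
      simp only [List.getD_eq_default l a0 (le_of_not_gt hi)]
      exact ha0
  have hcover : ∀ x ∈ derivedSet (A : Set X), ∃ i : Fin n, f i = x := by
    intro x hx
    have hxl : x ∈ l := by rw [hl]; exact Finset.mem_toList.2 (hDfin.mem_toFinset.2 hx)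
    obtain ⟨idx, hidx, hgot⟩ := List.mem_iff_getElem.1 hxl
    refine ⟨⟨idx, lt_of_lt_of_le hidx hlen⟩, ?_⟩
    rw [hf]
    show l.getD idx a0 = x
    rw [List.getD_eq_getElem l a0 hidx]
    exact hgot
  -- the closed superset of the leftover
  have hLclosed : IsClosed {a : X | ∀ i, (((k:ℝ)+1))⁻¹ ≤ dist a (f i)} := by
    rw [Set.setOf_forall]
    exact isClosed_iInter fun i =>
      isClosed_le continuous_const (continuous_id.dist continuous_const)
  have hLbar : ({a ∈ (A : Set X) | ∀ i, (((k:ℝ)+1))⁻¹ ≤ dist a (f i)}).Finite := by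
    refine finite_of_compact_subset_disjoint_derived (Set.sep_subset _ _)
      (A.isCompact.isClosed.inter hLclosed) ?_
    rintro x ⟨-, hx2⟩ hxD
    obtain ⟨i, hi⟩ := hcover x hxD
    have := hx2 i
    rw [hi, dist_self] at this
    exact absurd this (not_le.2 hpos)
  refine ⟨hLbar.toFinset.card, f, hfmem, ?_⟩
  refine le_trans (Set.encard_mono ?_) hLbar.encard_eq_coe_toFinset_card.le
  rintro a ⟨ha1, ha2, -⟩
  exact ⟨ha1, fun i => (ha2 i).le⟩

private lemma derived_le_of_mem_core (A : NonemptyCompacts X) (n : ℕ)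
    (h : ∀ k : ℕ, ∃ m, A ∈ coreSet X n m (((k:ℝ)+1))⁻¹ (-1) ∅) :
    (derivedSet (A : Set X)).encard ≤ n := by
  by_contra hcon
  push_neg at hcon
  obtain ⟨t, htsub, htcard⟩ := Set.exists_subset_encard_eq (Order.add_one_le_of_lt hcon)
  have htfin : t.Finite := Set.finite_of_encard_eq_coe (k := n + 1) (by exact_mod_cast htcard)
  obtain ⟨δ, hδpos, hδ⟩ : ∃ δ : ℝ, 0 < δ ∧ ∀ y ∈ t, ∀ y' ∈ t, y ≠ y' → δ ≤ dist y y' := by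
    classical
    set P := (htfin.toFinset ×ˢ htfin.toFinset).filter (fun p => p.1 ≠ p.2) with hP
    rcases P.eq_empty_or_nonempty with hPe | hPn
    · refine ⟨1, one_pos, fun y hy y' hy' hne => ?_⟩
      exfalso
      have hyP : (y, y') ∈ P := by
        rw [hP]
        simp only [Finset.mem_filter, Finset.mem_product, htfin.mem_toFinset]
        exact ⟨⟨hy, hy'⟩, hne⟩
      rw [hPe] at hyP
      exact absurd hyP (Finset.notMem_empty _)
    · refine ⟨P.inf' hPn fun p => dist p.1 p.2, ?_, ?_⟩
      · rw [Finset.lt_inf'_iff]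
        rintro ⟨y, y'⟩ hp
        rw [hP] at hp
        simp only [Finset.mem_filter, Finset.mem_product] at hp
        exact dist_pos.2 hp.2
      · intro y hy y' hy' hne
        have hmem : (y, y') ∈ P := by
          rw [hP]
          simp only [Finset.mem_filter, Finset.mem_product, htfin.mem_toFinset]
          exact ⟨⟨hy, hy'⟩, hne⟩
        exact Finset.inf'_le (fun p : X × X => dist p.1 p.2) hmem
  obtain ⟨k, hk⟩ := exists_nat_one_div_lt (show (0:ℝ) < δ/4 by positivity)
  rw [one_div] at hk
  obtain ⟨m, f, hfmem, hcard⟩ := h k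
  set r : ℝ := (((k:ℝ)+1))⁻¹ with hr
  have hrpos : 0 < r := by rw [hr]; positivity
  set V : Set X := {y ∈ t | ∃ i, dist y (f i) < 2 * r} with hV
  have hVcard : V.encard ≤ n := by
    rcases isEmpty_or_nonempty (Fin n) with hfe | hfn
    · have : V = ∅ := by
        ext y
        simp only [hV, Set.mem_setOf_eq, Set.mem_empty_iff_false, iff_false, not_and]
        rintro - ⟨i, -⟩
        exact hfe.elim i
      simp [this]
    · have hexi : ∀ y : X, ∃ i : Fin n, y ∈ V → dist y (f i) < 2 * r := by
        intro y
        by_cases hy : y ∈ V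
        · obtain ⟨i, hi⟩ := hy.2
          exact ⟨i, fun _ => hi⟩
        · exact ⟨Classical.arbitrary _, fun hmem => absurd hmem hy⟩
      choose g hg using hexi
      have hinj : Set.InjOn g V := by
        intro y hy y' hy' heq
        by_contra hne
        have h1 := hg y hy
        have h2 := hg y' hy'
        rw [heq] at h1
        have hd : dist y y' ≤ dist y (f (g y')) + dist y' (f (g y')) := by
          rw [dist_comm y' (f (g y'))]
          exact dist_triangle _ _ _
        have := hδ y hy.1 y' hy'.1 hne
        linarith
      have h1 : V.encard = (g '' V).encard := (hinj.encard_image).symm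
      have h2 : (g '' V).encard ≤ (Set.univ : Set (Fin n)).encard :=
        Set.encard_mono (Set.subset_univ _)
      rw [Set.encard_univ] at h2
      rw [h1]
      refine le_trans h2 (le_of_eq ?_)
      simp [ENat.card_eq_coe_fintype_card]
  obtain ⟨y, hyt, hyV⟩ : ∃ y ∈ t, y ∉ V := by
    by_contra hall
    push_neg at hall
    have : t.encard ≤ V.encard := Set.encard_mono hall
    rw [htcard] at this
    have hfinal : ((n:ℕ∞) + 1) ≤ (n:ℕ∞) := le_trans (by exact_mod_cast this) hVcard
    exact absurd ((ENat.add_one_le_iff (ENat.coe_ne_top n)).1 hfinal) (lt_irrefl _)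
  have hyfar : ∀ i, 2 * r ≤ dist y (f i) := by
    intro i
    by_contra hlt
    exact hyV ⟨hyt, i, not_le.1 hlt⟩
  have hyD : AccPt y (𝓟 (A : Set X)) := htsub hyt
  have hball : (Metric.ball y r ∩ (A : Set X)).Infinite :=
    accPt_nbhd_infinite hyD (Metric.ball_mem_nhds y hrpos)
  have hsubL : Metric.ball y r ∩ (A : Set X) ⊆
      {a ∈ (A : Set X) | (∀ i, r < dist a (f i)) ∧ (-1:ℝ) < infDist a (∅ : Set X)} := by
    rintro a ⟨hab, haA⟩
    rw [Metric.mem_ball] at hab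
    refine ⟨haA, fun i => ?_, lt_of_lt_of_le (by norm_num) infDist_nonneg⟩
    have h1 := hyfar i
    have h2 : dist y (f i) ≤ dist y a + dist a (f i) := dist_triangle _ _ _
    rw [dist_comm y a] at h2
    linarith
  have : ({a ∈ (A : Set X) | (∀ i, r < dist a (f i)) ∧ (-1:ℝ) < infDist a (∅ : Set X)}).Infinite :=
    hball.mono hsubL
  rw [this.encard_eq] at hcard
  simp at hcard

private lemma mem_coreF_of_derived_subset (A F : NonemptyCompacts X)
    (hD : derivedSet (A : Set X) ⊆ (F : Set X)) (k : ℕ) :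
    ∃ m, A ∈ coreSet X 0 m 0 (((k:ℝ)+1))⁻¹ (F : Set X) := by
  have hpos : (0:ℝ) < (((k:ℝ)+1))⁻¹ := by positivity
  have hLclosed : IsClosed {a : X | (((k:ℝ)+1))⁻¹ ≤ infDist a (F : Set X)} :=
    isClosed_le continuous_const (continuous_infDist_pt _)
  have hLbar : ({a ∈ (A : Set X) | (((k:ℝ)+1))⁻¹ ≤ infDist a (F : Set X)}).Finite := by
    refine finite_of_compact_subset_disjoint_derived (Set.sep_subset _ _)
      (A.isCompact.isClosed.inter hLclosed) ?_
    rintro x ⟨-, hx2⟩ hxD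
    rw [infDist_zero_of_mem (hD hxD)] at hx2
    exact absurd hx2 (not_le.2 hpos)
  refine ⟨hLbar.toFinset.card, Fin.elim0, fun i => i.elim0, ?_⟩
  refine le_trans (Set.encard_mono ?_) hLbar.encard_eq_coe_toFinset_card.le
  rintro a ⟨ha1, -, ha3⟩
  exact ⟨ha1, ha3.le⟩

private lemma derived_subset_of_mem_coreF (A F : NonemptyCompacts X)
    (h : ∀ k : ℕ, ∃ m, A ∈ coreSet X 0 m 0 (((k:ℝ)+1))⁻¹ (F : Set X)) :
    derivedSet (A : Set X) ⊆ (F : Set X) := by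
  intro p hp
  by_contra hpF
  have hpos : 0 < infDist p (F : Set X) :=
    (F.isCompact.isClosed.notMem_iff_infDist_pos F.nonempty).1 hpF
  obtain ⟨k, hk⟩ := exists_nat_one_div_lt (show (0:ℝ) < infDist p (F : Set X) / 2 by positivity)
  rw [one_div] at hk
  set r : ℝ := (((k:ℝ)+1))⁻¹ with hr
  have hrpos : 0 < r := by rw [hr]; positivity
  obtain ⟨m, f, -, hcard⟩ := h k
  have hball : (Metric.ball p r ∩ (A : Set X)).Infinite :=
    accPt_nbhd_infinite hp (Metric.ball_mem_nhds p hrpos)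
  have hsubL : Metric.ball p r ∩ (A : Set X) ⊆
      {a ∈ (A : Set X) | (∀ i, (0:ℝ) < dist a (f i)) ∧ r < infDist a (F : Set X)} := by
    rintro a ⟨hab, haA⟩
    rw [Metric.mem_ball] at hab
    refine ⟨haA, fun i => i.elim0, ?_⟩
    have h1 : infDist p (F : Set X) ≤ infDist a (F : Set X) + dist p a :=
      infDist_le_infDist_add_dist
    rw [dist_comm p a] at h1
    linarith
  have : ({a ∈ (A : Set X) | (∀ i, (0:ℝ) < dist a (f i)) ∧ r < infDist a (F : Set X)}).Infinite :=
    hball.mono hsubL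
  rw [this.encard_eq] at hcard
  simp at hcard

end Statement10Equiv
section Statement10Fsigma

open Metric Topology

private lemma isFsigma_iUnion_closed {Y : Type*} [TopologicalSpace Y] {f : ℕ → Set Y}
    (h : ∀ i, IsClosed (f i)) : IsFsigma (⋃ i, f i) :=
  ⟨f, h, rfl⟩

private lemma isFsigma_of_isOpen {Y : Type*} [MetricSpace Y] {S : Set Y} (h : IsOpen S) :
    IsFsigma S := by
  refine ⟨fun j => ⋂ y ∈ Sᶜ, {x | (((j:ℝ)+1))⁻¹ ≤ dist x y},
    fun j => isClosed_biInter (fun y _ =>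
      isClosed_le continuous_const (continuous_id.dist continuous_const)), ?_⟩
  ext x
  simp only [Set.mem_iUnion, Set.mem_iInter]
  constructor
  · intro hx
    obtain ⟨ε, hε, hball⟩ := Metric.isOpen_iff.1 h x hx
    obtain ⟨j, hj⟩ := exists_nat_one_div_lt hε
    rw [one_div] at hj
    refine ⟨j, fun y hy => ?_⟩
    by_contra hlt
    exact hy (hball (by rw [Metric.mem_ball, dist_comm]; exact lt_trans (not_le.1 hlt) hj))
  · rintro ⟨j, hj⟩
    by_contra hxS
    have hthis : (((j:ℝ)+1))⁻¹ ≤ dist x x := hj x hxS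
    rw [dist_self] at hthis
    have hpos : (0:ℝ) < (((j:ℝ)+1))⁻¹ := by positivity
    exact absurd hthis (not_le.2 hpos)

private lemma IsFsigma.inter' {Y : Type*} [TopologicalSpace Y] {S T : Set Y}
    (hS : IsFsigma S) (hT : IsFsigma T) : IsFsigma (S ∩ T) := by
  obtain ⟨f, hf, rfl⟩ := hS
  obtain ⟨g, hg, rfl⟩ := hT
  refine ⟨fun p => f (Nat.unpair p).1 ∩ g (Nat.unpair p).2,
    fun p => (hf _).inter (hg _), ?_⟩
  ext x
  simp only [Set.mem_inter_iff, Set.mem_iUnion]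
  constructor
  · rintro ⟨⟨i, hi⟩, ⟨j, hj⟩⟩
    refine ⟨Nat.pair i j, ?_⟩
    rw [Nat.unpair_pair]
    exact ⟨hi, hj⟩
  · rintro ⟨p, hp1, hp2⟩
    exact ⟨⟨_, hp1⟩, ⟨_, hp2⟩⟩

private lemma IsFsigmaDelta.inter' {Y : Type*} [TopologicalSpace Y] {S T : Set Y}
    (hS : IsFsigmaDelta S) (hT : IsFsigmaDelta T) : IsFsigmaDelta (S ∩ T) := by
  obtain ⟨f, hf, rfl⟩ := hS
  obtain ⟨g, hg, rfl⟩ := hT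
  refine ⟨fun i => f i ∩ g i, fun i => (hf i).inter' (hg i), ?_⟩
  ext x
  simp only [Set.mem_inter_iff, Set.mem_iInter]
  exact ⟨fun ⟨h1, h2⟩ i => ⟨h1 i, h2 i⟩, fun h => ⟨fun i => (h i).1, fun i => (h i).2⟩⟩

end Statement10Fsigma
theorem statement10 (X : Type*) [MetricSpace X] (n : ℕ) (hn : 1 ≤ n)
    (F : NonemptyCompacts X) :
    IsFsigmaDelta (An X n) ∧ IsFsigmaDelta (AnF X n (F : Set X)) := by
  classical
  have hAn : An X n = (⋂ m : ℕ, (coreSet X 0 m 0 (-1) ∅)ᶜ) ∩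
      ⋂ k : ℕ, ⋃ m : ℕ, coreSet X n m (((k:ℝ)+1))⁻¹ (-1) ∅ := by
    ext A
    simp only [An, Set.mem_setOf_eq, Set.mem_inter_iff, Set.mem_iInter, Set.mem_iUnion,
      Set.mem_compl_iff, coreSet_zero_eq]
    constructor
    · rintro ⟨h1, h2⟩
      have hne : (derivedSet (A : Set X)).Nonempty :=
        Set.nonempty_of_ncard_ne_zero (by omega)
      have hfin : (derivedSet (A : Set X)).Finite :=
        Set.finite_of_ncard_ne_zero (by omega)
      have henc : (derivedSet (A : Set X)).encard ≤ n := by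
        rw [hfin.encard_eq_coe_toFinset_card]
        have hcards : hfin.toFinset.card = (derivedSet (A : Set X)).ncard := by
          rw [Set.ncard_def, hfin.encard_eq_coe_toFinset_card, ENat.toNat_coe]
        rw [hcards]
        exact_mod_cast h2
      have hinf : (A : Set X).Infinite := (infinite_iff_derivedSet_nonempty A).2 hne
      refine ⟨fun m => ?_, fun k => mem_core_of_derived A n henc k⟩
      show ¬ ((A : Set X)).encard ≤ (m : ℕ∞)
      rw [hinf.encard_eq]
      simp
    · rintro ⟨h1, h2⟩
      have hinf : (A : Set X).Infinite := by
        by_contra hf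
        rw [Set.not_infinite] at hf
        exact h1 hf.toFinset.card (le_of_eq hf.encard_eq_coe_toFinset_card)
      have hne := (infinite_iff_derivedSet_nonempty A).1 hinf
      have henc := derived_le_of_mem_core A n h2
      obtain ⟨hfin, n0, hn0, hn0le⟩ := Set.encard_le_coe_iff.1 henc
      have hncard : (derivedSet (A : Set X)).ncard = n0 := by
        rw [Set.ncard_def, hn0, ENat.toNat_coe]
      constructor
      · rw [hncard]
        rcases Nat.eq_zero_or_pos n0 with rfl | h
        · exact absurd (Set.encard_eq_zero.1 (by exact_mod_cast hn0)) hne.ne_empty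
        · exact h
      · rw [hncard]; exact hn0le
  have hAnF : AnF X n (F : Set X) = An X n ∩
      ⋂ k : ℕ, ⋃ m : ℕ, coreSet X 0 m 0 (((k:ℝ)+1))⁻¹ (F : Set X) := by
    ext A
    simp only [AnF, Set.mem_setOf_eq, Set.mem_inter_iff, Set.mem_iInter, Set.mem_iUnion]
    exact and_congr_right fun _ =>
      ⟨fun h k => mem_coreF_of_derived_subset A F h k, fun h => derived_subset_of_mem_coreF A F h⟩
  have h1 : IsFsigmaDelta (An X n) := by
    rw [hAn]
    exact IsFsigmaDelta.inter' ⟨fun m => (coreSet X 0 m 0 (-1) ∅)ᶜ,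
      fun m => isFsigma_of_isOpen (isClosed_coreSet 0 m 0 (-1) ∅).isOpen_compl, rfl⟩
      ⟨fun k => ⋃ m : ℕ, coreSet X n m (((k:ℝ)+1))⁻¹ (-1) ∅,
      fun k => isFsigma_iUnion_closed fun m => isClosed_coreSet n m _ (-1) ∅, rfl⟩
  refine ⟨h1, ?_⟩
  rw [hAnF]
  exact h1.inter' ⟨fun k => ⋃ m : ℕ, coreSet X 0 m 0 (((k:ℝ)+1))⁻¹ (F : Set X),
    fun k => isFsigma_iUnion_closed fun m => isClosed_coreSet 0 m 0 _ (F : Set X), rfl⟩
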